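/- Let m, n, p, q ∈ ℕ with 1 ≤ m < n, 1 ≤ p < q and n − m = q − p =: g, and assume g ≠ m + p. Let α, β, γ, δ ∈ ℂ, and set φ(z) := α z^n + β z^m + γ z̄^p + δ z̄^q. For every k ∈ ℕ with k ≥ max{n, q}, setting ℓ := k + g, one has Σ_{j=0}^∞ (j+1)·( ∫_𝔻 φ(z) z^ℓ · conj(z^j) dA )·conj( ∫_𝔻 φ(z) z^k · conj(z^j) dA ) − Σ_{j=0}^∞ (j+1)·( ∫_𝔻 conj(φ(z)) z^ℓ · conj(z^j) dA )·conj( ∫_𝔻 conj(φ(z)) z^k · conj(z^j) dA ) = conj(α)·β·m·n/((k+1)(ℓ+1)(ℓ+m+1)) − conj(γ)·δ·p·q/((k+1)(ℓ+1)(ℓ+p+1)). (The left-hand side equals ⟨[T_φ*, T_φ] z^ℓ, z^k⟩ = ⟨P(φ z^ℓ), P(φ z^k)⟩ − ⟨P(φ̄ z^ℓ), P(φ̄ z^k)⟩ for the Toeplitz operator T_φ on the Bergman space.) -/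

import Mathlib

open MeasureTheory Complex Metric

/-- The normalized area measure on the open unit disk `𝔻 ⊆ ℂ`. -/
noncomputable def dA : Measure ℂ :=
  (ENNReal.ofReal (Real.pi)⁻¹) • (volume.restrict (ball (0 : ℂ) 1))


open scoped Real

noncomputable def E (a b : ℕ) : ℂ := if a = b then 1 / ((a : ℂ) + 1) else 0

lemma theta_integral (a b : ℕ) :
    (∫ θ in Set.Ioo (-π) π, Complex.exp ((((a:ℂ) - b) * Complex.I) * θ))
      = if a = b then ((2 * π : ℝ) : ℂ) else 0 := by
  have hle : -π ≤ π := by linarith [Real.pi_pos]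
  rw [← integral_Ioc_eq_integral_Ioo, ← intervalIntegral.integral_of_le hle]
  by_cases hab : a = b
  · subst hab
    simp only [sub_self, zero_mul, Complex.exp_zero, intervalIntegral.integral_const, if_pos rfl]
    push_cast
    rw [Complex.real_smul]
    push_cast
    ring
  · have hc : ((a:ℂ) - b) * Complex.I ≠ 0 :=
      mul_ne_zero (sub_ne_zero.mpr (by exact_mod_cast hab)) Complex.I_ne_zero
    rw [integral_exp_mul_complex hc, if_neg hab]
    have h3 : Complex.exp ((((a:ℂ) - b) * Complex.I) * ((π : ℝ) : ℂ))
        = Complex.exp ((((a:ℂ) - b) * Complex.I) * ((-π : ℝ) : ℂ)) := by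
      rw [Complex.exp_eq_exp_iff_exists_int]
      exact ⟨(a:ℤ) - (b:ℤ), by push_cast; ring⟩
    rw [h3, sub_self, zero_div]

lemma radial_integral (N : ℕ) :
    (∫ r in Set.Ioi (0:ℝ), Set.indicator (Set.Ioo (0:ℝ) 1) (fun r => ((r:ℂ)) ^ N) r)
      = 1 / ((N : ℂ) + 1) := by
  rw [setIntegral_indicator measurableSet_Ioo,
    Set.inter_eq_self_of_subset_right Set.Ioo_subset_Ioi_self]
  have hreal : (∫ r in Set.Ioo (0:ℝ) 1, r ^ N) = 1 / ((N:ℝ) + 1) := by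
    rw [← integral_Ioc_eq_integral_Ioo, ← intervalIntegral.integral_of_le zero_le_one,
      integral_pow]
    simp
  simp_rw [← Complex.ofReal_pow]
  rw [show (∫ r in Set.Ioo (0:ℝ) 1, ((r ^ N : ℝ) : ℂ))
      = (((∫ r in Set.Ioo (0:ℝ) 1, r ^ N : ℝ)) : ℂ) from integral_ofReal, hreal]
  push_cast; ring

lemma integral_monomial (a b : ℕ) :
    (∫ z : ℂ, z ^ a * (starRingEnd ℂ z) ^ b ∂dA) = E a b := by
  have hπ := Real.pi_pos
  rw [dA, integral_smul_measure, ENNReal.toReal_ofReal (by positivity)]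
  rw [← integral_indicator measurableSet_ball]
  rw [← Complex.integral_comp_polarCoord_symm,
    show polarCoord.target = Set.Ioi (0:ℝ) ×ˢ Set.Ioo (-π) π from rfl]
  have hcongr : (∫ p in Set.Ioi (0:ℝ) ×ˢ Set.Ioo (-π) π,
        p.1 • (Set.indicator (ball (0:ℂ) 1) (fun z => z ^ a * (starRingEnd ℂ z) ^ b)
          (Complex.polarCoord.symm p)))
      = ∫ p in Set.Ioi (0:ℝ) ×ˢ Set.Ioo (-π) π,
          (Set.indicator (Set.Ioo (0:ℝ) 1) (fun r => ((r:ℂ)) ^ (a+b+1)) p.1)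
            * Complex.exp ((((a:ℂ) - b) * Complex.I) * p.2) := by
    apply setIntegral_congr_fun (measurableSet_Ioi.prod measurableSet_Ioo)
    intro p hp
    obtain ⟨hp1, _⟩ := hp
    simp only [Set.mem_Ioi] at hp1
    dsimp only
    have hz : Complex.polarCoord.symm p = (p.1 : ℂ) * Complex.exp ((p.2 : ℂ) * Complex.I) := by
      rw [Complex.polarCoord_symm_apply, Complex.exp_mul_I, Complex.ofReal_cos,
        Complex.ofReal_sin]
    by_cases h : p.1 < 1
    · rw [Set.indicator_of_mem (show Complex.polarCoord.symm p ∈ ball (0:ℂ) 1 by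
        rw [mem_ball_zero_iff, Complex.norm_polarCoord_symm,
          abs_of_pos hp1]; exact h),
        Set.indicator_of_mem (Set.mem_Ioo.mpr ⟨hp1, h⟩)]
      rw [hz]
      have hconj : (starRingEnd ℂ) ((p.1 : ℂ) * Complex.exp ((p.2 : ℂ) * Complex.I))
          = (p.1 : ℂ) * Complex.exp (-((p.2 : ℂ) * Complex.I)) := by
        rw [map_mul, Complex.conj_ofReal, ← Complex.exp_conj, map_mul, Complex.conj_ofReal,
          Complex.conj_I]
        ring_nf
      rw [hconj, Complex.real_smul]
      have h2 : Complex.exp ((a:ℂ) * ((p.2:ℂ) * Complex.I))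
            * Complex.exp ((b:ℂ) * (-((p.2:ℂ) * Complex.I)))
          = Complex.exp ((((a:ℂ) - b) * Complex.I) * (p.2:ℂ)) := by
        rw [← Complex.exp_add]; congr 1; ring
      calc (p.1:ℂ) * (((p.1:ℂ) * Complex.exp ((p.2:ℂ) * Complex.I)) ^ a
            * ((p.1:ℂ) * Complex.exp (-((p.2:ℂ) * Complex.I))) ^ b)
          = (p.1:ℂ) ^ (a+b+1) * (Complex.exp ((a:ℂ) * ((p.2:ℂ) * Complex.I))
            * Complex.exp ((b:ℂ) * (-((p.2:ℂ) * Complex.I)))) := by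
            rw [mul_pow, mul_pow, ← Complex.exp_nat_mul, ← Complex.exp_nat_mul]; ring
        _ = _ := by rw [h2]
    · rw [Set.indicator_of_notMem (show Complex.polarCoord.symm p ∉ ball (0:ℂ) 1 by
        rw [mem_ball_zero_iff, Complex.norm_polarCoord_symm,
          abs_of_pos hp1]; exact h),
        Set.indicator_of_notMem (by simp [Set.mem_Ioo, h])]
      simp
  rw [hcongr, Measure.volume_eq_prod,
    setIntegral_prod_mul (fun r : ℝ => (Set.Ioo (0:ℝ) 1).indicator (fun r => ((r:ℂ)) ^ (a+b+1)) r)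
      (fun θ : ℝ => Complex.exp ((((a:ℂ) - b) * Complex.I) * θ)),
    radial_integral, theta_integral]
  unfold E
  by_cases hab : a = b
  · subst hab
    rw [if_pos rfl, if_pos rfl, Complex.real_smul]
    have h2 : ((a : ℂ) + 1) ≠ 0 := Nat.cast_add_one_ne_zero a
    have hπ' : ((π : ℝ) : ℂ) ≠ 0 := by exact_mod_cast Real.pi_ne_zero
    have h3 : ((a + a + 1 : ℕ) : ℂ) + 1 = 2 * ((a:ℂ) + 1) := by push_cast; ring
    rw [h3]
    push_cast
    field_simp
  · rw [if_neg hab, if_neg hab, mul_zero, smul_zero]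

lemma integrable_monomial (a b : ℕ) :
    Integrable (fun z : ℂ => z ^ a * (starRingEnd ℂ z) ^ b) dA := by
  rw [dA]
  refine Integrable.smul_measure ?_ ENNReal.ofReal_ne_top
  have hc : Continuous fun z : ℂ => z ^ a * (starRingEnd ℂ z) ^ b := by
    exact (continuous_pow a).mul ((Complex.continuous_conj).pow b)
  exact (hc.continuousOn.integrableOn_compact (isCompact_closedBall 0 1)).mono_set
    ball_subset_closedBall

set_option maxHeartbeats 1000000 in
/-- The off-diagonal entry A₁₀ = ⟨[T_φ*, T_φ] z^ℓ, z^k⟩ with ℓ = k + g, where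
g = n - m = q - p and g ≠ m + p, for φ = α z^n + β z^m + γ z̄^p + δ z̄^q. -/
theorem statement5 (m n p q g : ℕ) (hm : 1 ≤ m) (hmn : m < n) (hp : 1 ≤ p) (hpq : p < q)
    (hg1 : n - m = g) (hg2 : q - p = g) (hgmp : g ≠ m + p)
    (α β γ δ : ℂ) (φ : ℂ → ℂ)
    (hφ : ∀ z : ℂ, φ z = α * z ^ n + β * z ^ m
        + γ * (starRingEnd ℂ z) ^ p + δ * (starRingEnd ℂ z) ^ q)
    (k : ℕ) (hk : max n q ≤ k) :
    (∑' j : ℕ, ((j : ℂ) + 1)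
        * (∫ z : ℂ, φ z * z ^ (k + g) * (starRingEnd ℂ (z ^ j)) ∂dA)
        * (starRingEnd ℂ (∫ z : ℂ, φ z * z ^ k * (starRingEnd ℂ (z ^ j)) ∂dA)))
      - (∑' j : ℕ, ((j : ℂ) + 1)
        * (∫ z : ℂ, (starRingEnd ℂ (φ z)) * z ^ (k + g) * (starRingEnd ℂ (z ^ j)) ∂dA)
        * (starRingEnd ℂ
            (∫ z : ℂ, (starRingEnd ℂ (φ z)) * z ^ k * (starRingEnd ℂ (z ^ j)) ∂dA)))
    = (starRingEnd ℂ α) * β * (m : ℂ) * (n : ℂ)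
        / (((k : ℂ) + 1) * ((k : ℂ) + (g : ℂ) + 1) * ((k : ℂ) + (g : ℂ) + (m : ℂ) + 1))
      - (starRingEnd ℂ γ) * δ * (p : ℂ) * (q : ℂ)
        / (((k : ℂ) + 1) * ((k : ℂ) + (g : ℂ) + 1) * ((k : ℂ) + (g : ℂ) + (p : ℂ) + 1)) := by
  have hn : n = m + g := by omega
  have hq : q = p + g := by omega
  subst hn hq
  have hg : 1 ≤ g := by omega
  have hk1 : m + g ≤ k := le_trans (le_max_left _ _) hk
  have hk2 : p + g ≤ k := le_trans (le_max_right _ _) hk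
  have ia : ∀ (a b : ℕ) (c : ℂ),
      Integrable (fun z : ℂ => c * (z ^ a * (starRingEnd ℂ z) ^ b)) dA :=
    fun a b c => (integrable_monomial a b).const_mul c
  have ia2 : ∀ (a1 b1 a2 b2 : ℕ) (c1 c2 : ℂ),
      Integrable (fun z : ℂ => c1 * (z ^ a1 * (starRingEnd ℂ z) ^ b1)
        + c2 * (z ^ a2 * (starRingEnd ℂ z) ^ b2)) dA :=
    fun _ _ _ _ _ _ => (ia _ _ _).add (ia _ _ _)
  have ia3 : ∀ (a1 b1 a2 b2 a3 b3 : ℕ) (c1 c2 c3 : ℂ),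
      Integrable (fun z : ℂ => c1 * (z ^ a1 * (starRingEnd ℂ z) ^ b1)
        + (c2 * (z ^ a2 * (starRingEnd ℂ z) ^ b2)
          + c3 * (z ^ a3 * (starRingEnd ℂ z) ^ b3))) dA :=
    fun _ _ _ _ _ _ _ _ _ => (ia _ _ _).add (ia2 _ _ _ _ _ _)
  have keyφ : ∀ c j : ℕ, (∫ z : ℂ, φ z * z ^ c * (starRingEnd ℂ (z ^ j)) ∂dA)
      = α * E (m+g+c) j + (β * E (m+c) j + (γ * E c (p+j) + δ * E c (p+g+j))) := by
    intro c j
    have heq : (fun z : ℂ => φ z * z ^ c * (starRingEnd ℂ (z ^ j)))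
        = fun z => α * (z^(m+g+c) * (starRingEnd ℂ z)^j)
          + (β * (z^(m+c) * (starRingEnd ℂ z)^j)
          + (γ * (z^c * (starRingEnd ℂ z)^(p+j)) + δ * (z^c * (starRingEnd ℂ z)^(p+g+j)))) := by
      funext z; rw [hφ z, map_pow]; ring
    rw [heq, integral_add (ia _ _ _) (ia3 _ _ _ _ _ _ _ _ _),
      integral_add (ia _ _ _) (ia2 _ _ _ _ _ _),
      integral_add (ia _ _ _) (ia _ _ _),
      integral_const_mul, integral_const_mul, integral_const_mul, integral_const_mul,
      integral_monomial, integral_monomial, integral_monomial, integral_monomial]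
  have keyψ : ∀ c j : ℕ,
      (∫ z : ℂ, (starRingEnd ℂ (φ z)) * z ^ c * (starRingEnd ℂ (z ^ j)) ∂dA)
      = (starRingEnd ℂ α) * E c (m+g+j) + ((starRingEnd ℂ β) * E c (m+j)
        + ((starRingEnd ℂ γ) * E (p+c) j + (starRingEnd ℂ δ) * E (p+g+c) j)) := by
    intro c j
    have heq : (fun z : ℂ => (starRingEnd ℂ (φ z)) * z ^ c * (starRingEnd ℂ (z ^ j)))
        = fun z => (starRingEnd ℂ α) * (z^c * (starRingEnd ℂ z)^(m+g+j))
          + ((starRingEnd ℂ β) * (z^c * (starRingEnd ℂ z)^(m+j))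
          + ((starRingEnd ℂ γ) * (z^(p+c) * (starRingEnd ℂ z)^j)
            + (starRingEnd ℂ δ) * (z^(p+g+c) * (starRingEnd ℂ z)^j))) := by
      funext z
      rw [hφ z]
      simp only [map_add, map_mul, map_pow, Complex.conj_conj]
      ring
    rw [heq, integral_add (ia _ _ _) (ia3 _ _ _ _ _ _ _ _ _),
      integral_add (ia _ _ _) (ia2 _ _ _ _ _ _),
      integral_add (ia _ _ _) (ia _ _ _),
      integral_const_mul, integral_const_mul, integral_const_mul, integral_const_mul,
      integral_monomial, integral_monomial, integral_monomial, integral_monomial]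
  set C1 : ℂ := (starRingEnd ℂ α) * β / (((m+k+g : ℕ) : ℂ) + 1) with hC1
  set C2 : ℂ := (starRingEnd ℂ γ) * δ * (((k-p : ℕ) : ℂ) + 1)
      / ((((k+g : ℕ) : ℂ) + 1) * (((k:ℕ):ℂ) + 1)) with hC2
  set D1 : ℂ := (starRingEnd ℂ α) * β * (((k-m : ℕ) : ℂ) + 1)
      / ((((k+g:ℕ):ℂ)+1) * (((k:ℕ):ℂ)+1)) with hD1
  set D2 : ℂ := (starRingEnd ℂ γ) * δ / (((p+g+k : ℕ):ℂ)+1) with hD2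
  have hpt1 : ∀ j : ℕ, ((j : ℂ) + 1)
        * (∫ z : ℂ, φ z * z ^ (k + g) * (starRingEnd ℂ (z ^ j)) ∂dA)
        * (starRingEnd ℂ (∫ z : ℂ, φ z * z ^ k * (starRingEnd ℂ (z ^ j)) ∂dA))
      = (if j = m+k+g then C1 else 0) + (if k = p+j then C2 else 0) := by
    intro j
    rw [keyφ (k+g) j, keyφ k j]
    by_cases h1 : j = m+k+g
    · simp only [E, eq_false (show ¬(m+g+(k+g) = j) by omega),
        eq_true (show m+(k+g) = j by omega),
        eq_false (show ¬(k+g = p+j) by omega), eq_false (show ¬(k+g = p+g+j) by omega),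
        eq_true (show m+g+k = j by omega), eq_false (show ¬(m+k = j) by omega),
        eq_false (show ¬(k = p+j) by omega), eq_false (show ¬(k = p+g+j) by omega),
        eq_true h1, if_true, if_false, mul_zero, zero_mul, add_zero, zero_add,
        map_mul, map_add, map_one, map_zero, map_natCast, map_div₀, hC1]
      subst h1
      rw [show m+(k+g) = m+k+g from by omega, show m+g+k = m+k+g from by omega]
      set x : ℂ := ((m+k+g : ℕ):ℂ) + 1 with hx
      have hx0 : x ≠ 0 := hx ▸ Nat.cast_add_one_ne_zero _
      field_simp
    · by_cases h2 : k = p+j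
      · simp only [E, eq_false (show ¬(m+g+(k+g) = j) by omega),
          eq_false (show ¬(m+(k+g) = j) by omega),
          eq_false (show ¬(k+g = p+j) by omega), eq_true (show k+g = p+g+j by omega),
          eq_false (show ¬(m+g+k = j) by omega), eq_false (show ¬(m+k = j) by omega),
          eq_true h2, eq_false (show ¬(k = p+g+j) by omega),
          eq_false h1, if_true, if_false, mul_zero, zero_mul, add_zero, zero_add,
          map_mul, map_add, map_one, map_zero, map_natCast, map_div₀, hC2]
        have hpj : ((p:ℕ):ℂ) + ((j:ℕ):ℂ) = ((k:ℕ):ℂ) := by exact_mod_cast h2.symm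
        have hj : ((j:ℕ):ℂ) = (k:ℂ) - p := by linear_combination hpj
        have hkp : ((k - p : ℕ) : ℂ) = (k:ℂ) - p := Nat.cast_sub (by omega)
        rw [hj, hkp]
        set x : ℂ := ((k+g:ℕ):ℂ) + 1 with hx
        set y : ℂ := ((k:ℕ):ℂ) + 1 with hy
        have hx0 : x ≠ 0 := hx ▸ Nat.cast_add_one_ne_zero _
        have hy0 : y ≠ 0 := hy ▸ Nat.cast_add_one_ne_zero _
        field_simp
      · by_cases hcase : m+k = j ∨ k = p+g+j
        · simp only [E, eq_false (show ¬(m+g+(k+g) = j) by omega),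
            eq_false (show ¬(m+(k+g) = j) by omega),
            eq_false (show ¬(k+g = p+j) by omega), eq_false (show ¬(k+g = p+g+j) by omega),
            eq_false h1, eq_false h2, if_false, mul_zero, zero_mul, add_zero, zero_add]
        · have h3 : ¬(m+k = j) := fun h => hcase (Or.inl h)
          have h4 : ¬(k = p+g+j) := fun h => hcase (Or.inr h)
          simp only [E, eq_false (show ¬(m+g+k = j) by omega), eq_false h3,
            eq_false h2, eq_false h4, eq_false h1, if_false, mul_zero, zero_mul,
            add_zero, zero_add, map_zero]
  have hpt2 : ∀ j : ℕ, ((j : ℂ) + 1)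
        * (∫ z : ℂ, (starRingEnd ℂ (φ z)) * z ^ (k + g) * (starRingEnd ℂ (z ^ j)) ∂dA)
        * (starRingEnd ℂ (∫ z : ℂ, (starRingEnd ℂ (φ z)) * z ^ k * (starRingEnd ℂ (z ^ j)) ∂dA))
      = (if k = m+j then D1 else 0) + (if j = p+g+k then D2 else 0) := by
    intro j
    rw [keyψ (k+g) j, keyψ k j]
    by_cases h1 : k = m+j
    · simp only [E, eq_true (show k+g = m+g+j by omega),
        eq_false (show ¬(k+g = m+j) by omega),
        eq_false (show ¬(p+(k+g) = j) by omega), eq_false (show ¬(p+g+(k+g) = j) by omega),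
        eq_false (show ¬(k = m+g+j) by omega), eq_true h1,
        eq_false (show ¬(p+k = j) by omega), eq_false (show ¬(p+g+k = j) by omega),
        eq_false (show ¬(j = p+g+k) by omega), if_true, if_false, mul_zero, zero_mul,
        add_zero, zero_add, map_mul, map_add, map_one, map_zero, map_natCast, map_div₀,
        Complex.conj_conj, hD1]
      have hmj : ((m:ℕ):ℂ) + ((j:ℕ):ℂ) = ((k:ℕ):ℂ) := by exact_mod_cast h1.symm
      have hj : ((j:ℕ):ℂ) = (k:ℂ) - m := by linear_combination hmj
      have hkm : ((k - m : ℕ) : ℂ) = (k:ℂ) - m := Nat.cast_sub (by omega)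
      rw [hj, hkm]
      set x : ℂ := ((k+g:ℕ):ℂ) + 1 with hx
      set y : ℂ := ((k:ℕ):ℂ) + 1 with hy
      have hx0 : x ≠ 0 := hx ▸ Nat.cast_add_one_ne_zero _
      have hy0 : y ≠ 0 := hy ▸ Nat.cast_add_one_ne_zero _
      field_simp
    · by_cases h2 : j = p+g+k
      · simp only [E, eq_false (show ¬(k+g = m+g+j) by omega),
          eq_false (show ¬(k+g = m+j) by omega),
          eq_true (show p+(k+g) = j by omega), eq_false (show ¬(p+g+(k+g) = j) by omega),
          eq_false (show ¬(k = m+g+j) by omega), eq_false h1,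
          eq_false (show ¬(p+k = j) by omega), eq_true (show p+g+k = j by omega),
          eq_true h2, if_true, if_false, mul_zero, zero_mul, add_zero, zero_add,
          map_mul, map_add, map_one, map_zero, map_natCast, map_div₀,
          Complex.conj_conj, hD2]
        subst h2
        rw [show p+(k+g) = p+g+k from by omega]
        set x : ℂ := ((p+g+k : ℕ):ℂ) + 1 with hx
        have hx0 : x ≠ 0 := hx ▸ Nat.cast_add_one_ne_zero _
        field_simp
      · by_cases hcase : k = m+g+j ∨ p+k = j
        · simp only [E, eq_false (show ¬(k+g = m+g+j) by omega),
            eq_false (show ¬(k+g = m+j) by omega),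
            eq_false (show ¬(p+(k+g) = j) by omega),
            eq_false (show ¬(p+g+(k+g) = j) by omega),
            eq_false h1, eq_false h2, if_false, mul_zero, zero_mul, add_zero, zero_add]
        · have h3 : ¬(k = m+g+j) := fun h => hcase (Or.inl h)
          have h4 : ¬(p+k = j) := fun h => hcase (Or.inr h)
          simp only [E, eq_false h3, eq_false (show ¬(k = m+j) by omega),
            eq_false h4, eq_false (show ¬(p+g+k = j) by omega), eq_false h1, eq_false h2,
            if_false, mul_zero, zero_mul, add_zero, zero_add, map_zero]
  rw [tsum_congr hpt1, tsum_congr hpt2]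
  have hs1 : (∑' j : ℕ, ((if j = m+k+g then C1 else 0) + (if k = p+j then C2 else 0)))
      = C1 + C2 := by
    rw [tsum_eq_sum (s := ({m+k+g, k-p} : Finset ℕ)) ?_]
    · rw [Finset.sum_pair (by omega : m+k+g ≠ k-p),
        if_pos rfl, if_neg (by omega), if_neg (by omega), if_pos (by omega)]
      ring
    · intro j hj
      simp only [Finset.mem_insert, Finset.mem_singleton] at hj
      push_neg at hj
      rw [if_neg (by omega), if_neg (by omega), add_zero]
  have hs2 : (∑' j : ℕ, ((if k = m+j then D1 else 0) + (if j = p+g+k then D2 else 0)))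
      = D1 + D2 := by
    rw [tsum_eq_sum (s := ({k-m, p+g+k} : Finset ℕ)) ?_]
    · rw [Finset.sum_pair (by omega : k-m ≠ p+g+k),
        if_pos (by omega), if_neg (by omega), if_neg (by omega), if_pos rfl]
      ring
    · intro j hj
      simp only [Finset.mem_insert, Finset.mem_singleton] at hj
      push_neg at hj
      rw [if_neg (by omega), if_neg (by omega), add_zero]
  rw [hs1, hs2, hC1, hC2, hD1, hD2]
  have e1 : ((k - p : ℕ) : ℂ) = (k:ℂ) - p := Nat.cast_sub (by omega)
  have e2 : ((k - m : ℕ) : ℂ) = (k:ℂ) - m := Nat.cast_sub (by omega)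
  rw [e1, e2]
  have d1 : ((m:ℂ) + ↑k + ↑g + 1) ≠ 0 := by
    intro h
    apply Nat.cast_add_one_ne_zero (R := ℂ) (m+k+g)
    push_cast
    linear_combination h
  have d2 : ((k:ℂ) + ↑g + 1) ≠ 0 := by
    intro h
    apply Nat.cast_add_one_ne_zero (R := ℂ) (k+g)
    push_cast
    linear_combination h
  have d3 : ((k:ℂ) + 1) ≠ 0 := Nat.cast_add_one_ne_zero k
  have d4 : ((p:ℂ) + ↑g + ↑k + 1) ≠ 0 := by
    intro h
    apply Nat.cast_add_one_ne_zero (R := ℂ) (p+g+k)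
    push_cast
    linear_combination h
  have d5 : ((k:ℂ) + ↑g + ↑m + 1) ≠ 0 := fun h => d1 (by linear_combination h)
  have d6 : ((k:ℂ) + ↑g + ↑p + 1) ≠ 0 := fun h => d4 (by linear_combination h)
  push_cast
  field_simp
  ring
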